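/- Let F : A → B be an exact functor with adjoints L ⊣ F ⊣ R between enhanced triangulated categories, with twist T and cotwist C. Then there are natural isomorphisms T F [−1] ≅ F C [1] and R T [−1] ≅ C R [1]. -/

import Mathlib

open CategoryTheory Limits Pretriangulated Category

/-- If `Z ⟶ E ⟶ X` and `X ⟶ E ⟶ W` are parts of distinguished triangles and
`f ≫ e = 𝟙 X`, then the composite `Z ⟶ E ⟶ W` is an isomorphism. -/
lemma key_splitting {𝒞 : Type*} [Category 𝒞] [HasZeroObject 𝒞] [Preadditive 𝒞] [HasShift 𝒞 ℤ]
    [∀ n : ℤ, (shiftFunctor 𝒞 n).Additive] [Pretriangulated 𝒞]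
    {Z E X W : 𝒞} (b : Z ⟶ E) (e : E ⟶ X) (d : X ⟶ Z⟦(1:ℤ)⟧)
    (f : X ⟶ E) (g : E ⟶ W) (h : W ⟶ X⟦(1:ℤ)⟧)
    (hT1 : Triangle.mk b e d ∈ distTriang 𝒞)
    (hT2 : Triangle.mk f g h ∈ distTriang 𝒞)
    (hfe : f ≫ e = 𝟙 X) : IsIso (b ≫ g) := by
  have hbe : b ≫ e = 0 := comp_distTriang_mor_zero₁₂ _ hT1
  have hfg : f ≫ g = 0 := comp_distTriang_mor_zero₁₂ _ hT2
  have hed : e ≫ d = 0 := comp_distTriang_mor_zero₂₃ _ hT1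
  have hhf : h ≫ f⟦(1:ℤ)⟧' = 0 := comp_distTriang_mor_zero₃₁ _ hT2
  have hd : d = 0 := by
    calc d = f ≫ (e ≫ d) := by rw [← assoc, hfe, id_comp]
    _ = 0 := by rw [hed, comp_zero]
  have hh : h = 0 := by
    calc h = (h ≫ f⟦(1:ℤ)⟧') ≫ e⟦(1:ℤ)⟧' := by
          rw [assoc, ← Functor.map_comp, hfe]; simp
    _ = 0 := by rw [hhf, zero_comp]
  have hmb : Mono b := (Triangle.mor₃_eq_zero_iff_mono₁ _ hT1).1 hd
  have hge : Epi g := Triangle.epi₂ _ hT2 hh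
  obtain ⟨p, hp⟩ := Triangle.coyoneda_exact₂ _ hT1 (𝟙 E - e ≫ f)
    (by show (𝟙 E - e ≫ f) ≫ e = 0; rw [Preadditive.sub_comp, assoc, hfe, id_comp, comp_id, sub_self])
  obtain ⟨u, hu⟩ := Triangle.yoneda_exact₂ _ hT2 (𝟙 E - e ≫ f)
    (by show f ≫ (𝟙 E - e ≫ f) = 0; rw [Preadditive.comp_sub, comp_id, ← assoc, hfe, id_comp, sub_self])
  change E ⟶ Z at p
  change W ⟶ E at u
  change 𝟙 E - e ≫ f = p ≫ b at hp
  change 𝟙 E - e ≫ f = g ≫ u at hu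
  refine ⟨u ≫ p, ?_, ?_⟩
  · have h1 : (b ≫ g) ≫ (u ≫ p) = b ≫ p := by
      have : g ≫ u = 𝟙 E - e ≫ f := hu.symm
      rw [assoc, ← assoc g u, this]
      simp [Preadditive.sub_comp, Preadditive.comp_sub, reassoc_of% hbe, hbe, hfg]
    rw [h1, ← cancel_mono b]
    rw [assoc, ← hp]
    simp [Preadditive.comp_sub, reassoc_of% hbe, hbe, hfg]
  · have h1 : (u ≫ p) ≫ (b ≫ g) = u ≫ g := by
      rw [assoc, ← assoc p b, ← hp]
      simp [Preadditive.sub_comp, Preadditive.comp_sub, reassoc_of% hfg, hbe, hfg]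
    rw [h1, ← cancel_epi g, ← assoc, ← hu]
    simp [Preadditive.sub_comp, reassoc_of% hfg, hbe, hfg]

/-- For an exact functor `F` with adjoints `L ⊣ F ⊣ R`, twist `T`
(triangle `FR → id → T`) and cotwist `C` (triangle `C → id → RF`), there are
natural isomorphisms `T F [-1] ≅ F C [1]` and `R T [-1] ≅ C R [1]`. -/
theorem twist_cotwist_compatibilities {A B : Type*} [Category A] [Category B]
    [HasZeroObject A] [HasZeroObject B] [Preadditive A] [Preadditive B]
    [HasShift A ℤ] [HasShift B ℤ]
    [∀ n : ℤ, (shiftFunctor A n).Additive] [∀ n : ℤ, (shiftFunctor B n).Additive]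
    [Pretriangulated A] [Pretriangulated B]
    (F : A ⥤ B) (L R : B ⥤ A)
    [F.CommShift ℤ] [L.CommShift ℤ] [R.CommShift ℤ]
    [F.IsTriangulated] [L.IsTriangulated] [R.IsTriangulated]
    (adjL : L ⊣ F) (adjR : F ⊣ R)
    -- the twist T, defined by the triangle FR → id_B → T
    (T : B ⥤ B) (α : 𝟭 B ⟶ T) (β : T ⟶ (R ⋙ F) ⋙ shiftFunctor B (1 : ℤ))
    (hT : ∀ X : B, Triangle.mk (adjR.counit.app X) (α.app X) (β.app X) ∈ distTriang B)
    -- the cotwist C, defined by the triangle C → id_A → RF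
    (C : A ⥤ A) (δ : C ⟶ 𝟭 A) (γ : F ⋙ R ⟶ C ⋙ shiftFunctor A (1 : ℤ))
    (hC : ∀ X : A, Triangle.mk (δ.app X) (adjR.unit.app X) (γ.app X) ∈ distTriang A) :
    Nonempty ((F ⋙ T) ⋙ shiftFunctor B (-1 : ℤ) ≅ (C ⋙ F) ⋙ shiftFunctor B (1 : ℤ)) ∧
    Nonempty ((T ⋙ R) ⋙ shiftFunctor A (-1 : ℤ) ≅ (R ⋙ C) ⋙ shiftFunctor A (1 : ℤ)) := by
  constructor
  · -- first isomorphism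
    let φ : (F ⋙ T) ⋙ shiftFunctor B (-1 : ℤ) ⟶ (C ⋙ F) ⋙ shiftFunctor B (1 : ℤ) :=
      { app := fun X =>
          (Triangle.mk (adjR.counit.app (F.obj X)) (α.app (F.obj X))
            (β.app (F.obj X))).invRotate.mor₁ ≫
          (F.map (γ.app X) ≫ (F.commShiftIso (1 : ℤ)).hom.app (C.obj X))
        naturality := fun X Y m => by
          change ((F ⋙ T) ⋙ shiftFunctor B (-1)).map m ≫ ((-((shiftFunctor B (-1)).map (β.app (F.obj Y)) ≫
              (shiftFunctorCompIsoId B (1:ℤ) (-1:ℤ) (by omega)).hom.app (F.obj (R.obj (F.obj Y))))) ≫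
              (F.map (γ.app Y) ≫ (F.commShiftIso (1 : ℤ)).hom.app (C.obj Y))) =
            ((-((shiftFunctor B (-1)).map (β.app (F.obj X)) ≫
              (shiftFunctorCompIsoId B (1:ℤ) (-1:ℤ) (by omega)).hom.app (F.obj (R.obj (F.obj X))))) ≫
              (F.map (γ.app X) ≫ (F.commShiftIso (1 : ℤ)).hom.app (C.obj X))) ≫
            ((C ⋙ F) ⋙ shiftFunctor B 1).map m
          dsimp [Triangle.invRotate]
          simp only [Preadditive.neg_comp, Preadditive.comp_neg, neg_inj, assoc]
          rw [← Functor.map_comp_assoc, β.naturality (F.map m), Functor.map_comp, assoc]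
          erw [(shiftFunctorCompIsoId B (1:ℤ) (-1:ℤ) (by omega)).hom.naturality_assoc
            (F.map (R.map (F.map m)))]
          dsimp
          rw [← Functor.map_comp_assoc]
          erw [γ.naturality m]
          rw [Functor.map_comp, assoc]
          erw [(F.commShiftIso (1:ℤ)).hom.naturality (C.map m)]
          rfl }
    have : ∀ X : A, IsIso (φ.app X) := by
      intro X
      have h1 : (Triangle.mk (adjR.counit.app (F.obj X)) (α.app (F.obj X))
            (β.app (F.obj X))).invRotate ∈ distTriang B :=
        inv_rot_of_distTriang _ (hT (F.obj X))
      have h2 : (F.mapTriangle.obj (Triangle.mk (δ.app X) (adjR.unit.app X)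
            (γ.app X))).rotate ∈ distTriang B :=
        rot_of_distTriang _ (F.map_distinguished _ (hC X))
      exact key_splitting _ _ _ _ _ _ h1 h2 (adjR.left_triangle_components X)
    have : IsIso φ := NatIso.isIso_of_isIso_app φ
    exact ⟨asIso φ⟩
  · -- second isomorphism
    let φ : (T ⋙ R) ⋙ shiftFunctor A (-1 : ℤ) ⟶ (R ⋙ C) ⋙ shiftFunctor A (1 : ℤ) :=
      { app := fun Y =>
          (R.mapTriangle.obj (Triangle.mk (adjR.counit.app Y) (α.app Y)
            (β.app Y))).invRotate.mor₁ ≫ γ.app (R.obj Y)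
        naturality := fun X Y m => by
          have hcomm : R.map (T.map m) ≫ R.map (β.app Y) ≫
              (R.commShiftIso (1:ℤ)).hom.app (F.obj (R.obj Y)) =
              (R.map (β.app X) ≫ (R.commShiftIso (1:ℤ)).hom.app (F.obj (R.obj X))) ≫
                (shiftFunctor A (1:ℤ)).map (R.map (F.map (R.map m))) := by
            rw [← Functor.map_comp_assoc, β.naturality m, Functor.map_comp, assoc]
            erw [(R.commShiftIso (1:ℤ)).hom.naturality (F.map (R.map m))]
            rw [← assoc]
            rfl
          change ((T ⋙ R) ⋙ shiftFunctor A (-1)).map m ≫ ((-((shiftFunctor A (-1)).map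
              (R.map (β.app Y) ≫ (R.commShiftIso (1:ℤ)).hom.app (F.obj (R.obj Y))) ≫
              (shiftFunctorCompIsoId A (1:ℤ) (-1:ℤ) (by omega)).hom.app (R.obj (F.obj (R.obj Y))))) ≫
              γ.app (R.obj Y)) =
            ((-((shiftFunctor A (-1)).map
              (R.map (β.app X) ≫ (R.commShiftIso (1:ℤ)).hom.app (F.obj (R.obj X))) ≫
              (shiftFunctorCompIsoId A (1:ℤ) (-1:ℤ) (by omega)).hom.app (R.obj (F.obj (R.obj X))))) ≫
              γ.app (R.obj X)) ≫
            ((R ⋙ C) ⋙ shiftFunctor A 1).map m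
          dsimp [Triangle.invRotate]
          simp only [Preadditive.neg_comp, Preadditive.comp_neg, neg_inj, assoc]
          rw [← Functor.map_comp_assoc, hcomm, Functor.map_comp, assoc]
          erw [(shiftFunctorCompIsoId A (1:ℤ) (-1:ℤ) (by omega)).hom.naturality_assoc
            (R.map (F.map (R.map m)))]
          erw [γ.naturality (R.map m)]
          rfl }
    have : ∀ Y : B, IsIso (φ.app Y) := by
      intro Y
      have h1 : (R.mapTriangle.obj (Triangle.mk (adjR.counit.app Y) (α.app Y)
            (β.app Y))).invRotate ∈ distTriang A :=
        inv_rot_of_distTriang _ (R.map_distinguished _ (hT Y))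
      have h2 : (Triangle.mk (δ.app (R.obj Y)) (adjR.unit.app (R.obj Y))
            (γ.app (R.obj Y))).rotate ∈ distTriang A :=
        rot_of_distTriang _ (hC (R.obj Y))
      exact key_splitting _ _ _ _ _ _ h1 h2 (adjR.right_triangle_components Y)
    have : IsIso φ := NatIso.isIso_of_isIso_app φ
    exact ⟨asIso φ⟩
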